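/- Let m ≥ 1, and for j = 1,…,n let v_j ∈ ℝ^p have entries in {0,1} with exactly m entries equal to 1 and let u_j ∈ ℝ^q be a one-hot vector. Fix constants N_1, N_2 ≥ 0 and let W range over the set of matrices W ∈ ℝ^{p×q} such that ‖W − w̄(W) 1_qᵀ‖_F ≤ N_1 and ‖w̄(W)‖ ≤ N_2, where w̄(W) ∈ ℝ^p is the column average of W. Let σ = (σ_1,…,σ_n) be uniform on {−1,+1}^n. Then E_σ[ sup_W Σ_{j=1}^n σ_j ⟨W, v_j u_jᵀ⟩_F ] ≤ (N_1 + N_2) √(mn). -/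
import Mathlib

open scoped BigOperators

private lemma eps_orth {n : ℕ} (i j : Fin n) (hij : i ≠ j) :
    ∑ σ : Fin n → Bool, (if σ i then (1:ℝ) else -1) * (if σ j then (1:ℝ) else -1) = 0 := by
  apply Finset.sum_ninvolution (fun σ => Function.update σ i (!(σ i)))
  · intro σ
    have hji : j ≠ i := hij.symm
    simp [Function.update_self, Function.update_of_ne hji]
    cases σ i <;> cases σ j <;> norm_num
  · intro σ _
    intro h
    have := congrFun h i
    simp [Function.update_self] at this
  · intro σ; exact Finset.mem_univ _
  · intro σ
    funext x
    by_cases hx : x = i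
    · subst hx; simp
    · simp [Function.update_of_ne hx]

private lemma eps_diag {n : ℕ} (i : Fin n) :
    ∑ σ : Fin n → Bool, (if σ i then (1:ℝ) else -1) * (if σ i then (1:ℝ) else -1)
      = 2 ^ n := by
  have : ∀ σ : Fin n → Bool, (if σ i then (1:ℝ) else -1) * (if σ i then (1:ℝ) else -1) = 1 := by
    intro σ; cases σ i <;> norm_num
  simp only [this, Finset.sum_const, Finset.card_univ]
  simp [Fintype.card_fun]

private lemma sum_sq_rademacher {n : ℕ} (a : Fin n → ℝ) :
    ∑ σ : Fin n → Bool, (∑ j, (if σ j then (1:ℝ) else -1) * a j) ^ 2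
      = 2 ^ n * ∑ j, (a j) ^ 2 := by
  have h1 : ∀ σ : Fin n → Bool,
      (∑ j, (if σ j then (1:ℝ) else -1) * a j) ^ 2
        = ∑ i, ∑ j, (a i * a j) * ((if σ i then (1:ℝ) else -1) * (if σ j then (1:ℝ) else -1)) := by
    intro σ
    rw [sq, Finset.sum_mul_sum]
    apply Finset.sum_congr rfl; intro i _
    apply Finset.sum_congr rfl; intro j _
    ring
  simp only [h1]
  rw [Finset.sum_comm]
  have h2 : ∀ i : Fin n,
      (∑ σ : Fin n → Bool, ∑ j, (a i * a j) * ((if σ i then (1:ℝ) else -1) * (if σ j then (1:ℝ) else -1)))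
      = 2 ^ n * (a i) ^ 2 := by
    intro i
    rw [Finset.sum_comm]
    have h3 : ∀ j : Fin n,
        (∑ σ : Fin n → Bool, (a i * a j) * ((if σ i then (1:ℝ) else -1) * (if σ j then (1:ℝ) else -1)))
        = if j = i then 2 ^ n * (a i) ^ 2 else 0 := by
      intro j
      rw [← Finset.mul_sum]
      by_cases hj : j = i
      · subst hj; rw [eps_diag]; simp [sq]; ring
      · rw [eps_orth i j (Ne.symm hj), mul_zero]; simp [hj]
    simp only [h3]
    simp
  simp only [h2]
  rw [← Finset.mul_sum]

theorem expected_sup_rademacher_process_constrained_matrices_le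
    (m n p q : ℕ) (hm : 1 ≤ m) (hq : 1 ≤ q)
    (N1 N2 : ℝ) (hN1 : 0 ≤ N1) (hN2 : 0 ≤ N2)
    (v : Fin n → Fin p → ℝ) (u : Fin n → Fin q → ℝ)
    (hv : ∀ j, (∀ k, v j k = 0 ∨ v j k = 1) ∧ ∑ k, v j k = (m : ℝ))
    (hu : ∀ j, (∀ l, u j l = 0 ∨ u j l = 1) ∧ ∑ l, u j l = 1) :
    (∑ σ : Fin n → Bool,
        sSup {t : ℝ | ∃ W : Fin p → Fin q → ℝ,
          (Real.sqrt (∑ k : Fin p, ∑ l : Fin q,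
              (W k l - (∑ l' : Fin q, W k l') / (q : ℝ)) ^ 2) ≤ N1
            ∧ Real.sqrt (∑ k : Fin p, ((∑ l' : Fin q, W k l') / (q : ℝ)) ^ 2) ≤ N2)
          ∧ t = ∑ j : Fin n, (if σ j then (1 : ℝ) else -1) *
                  ∑ k : Fin p, ∑ l : Fin q, W k l * (v j k * u j l)}) / 2 ^ n
      ≤ (N1 + N2) * Real.sqrt ((m : ℝ) * n) := by
  have hsq01 : ∀ x : ℝ, (x = 0 ∨ x = 1) → x ^ 2 = x := by
    rintro x (rfl | rfl) <;> norm_num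
  set ε : (Fin n → Bool) → Fin n → ℝ := fun σ j => if σ j then (1:ℝ) else -1 with hε
  set A : (Fin n → Bool) → Fin p → Fin q → ℝ :=
    fun σ k l => ∑ j, ε σ j * (v j k * u j l) with hA
  set y : (Fin n → Bool) → Fin p → ℝ := fun σ k => ∑ j, ε σ j * v j k with hy
  set B : (Fin n → Bool) → ℝ :=
    fun σ => N1 * Real.sqrt (∑ k, ∑ l, (A σ k l) ^ 2)
      + N2 * Real.sqrt (∑ k, (y σ k) ^ 2) with hB
  -- row sums of A are y
  have hAy : ∀ σ k, ∑ l, A σ k l = y σ k := by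
    intro σ k
    rw [Finset.sum_comm]
    apply Finset.sum_congr rfl
    intro j _
    rw [← Finset.mul_sum, ← Finset.mul_sum, (hu j).2, mul_one]
  -- Step A : pointwise bound on the sup
  have stepA : ∀ σ : Fin n → Bool,
      sSup {t : ℝ | ∃ W : Fin p → Fin q → ℝ,
          (Real.sqrt (∑ k : Fin p, ∑ l : Fin q,
              (W k l - (∑ l' : Fin q, W k l') / (q : ℝ)) ^ 2) ≤ N1
            ∧ Real.sqrt (∑ k : Fin p, ((∑ l' : Fin q, W k l') / (q : ℝ)) ^ 2) ≤ N2)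
          ∧ t = ∑ j : Fin n, (if σ j then (1 : ℝ) else -1) *
                  ∑ k : Fin p, ∑ l : Fin q, W k l * (v j k * u j l)} ≤ B σ := by
    intro σ
    apply Real.sSup_le
    · rintro t ⟨W, ⟨h1, h2⟩, ht⟩
      set c : Fin p → ℝ := fun k => (∑ l', W k l') / (q : ℝ) with hc
      have ht' : t = ∑ k, ∑ l, W k l * A σ k l := by
        rw [ht]
        simp only [Finset.mul_sum]
        rw [Finset.sum_comm]
        apply Finset.sum_congr rfl; intro k _
        rw [Finset.sum_comm]
        apply Finset.sum_congr rfl; intro l _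
        rw [hA]; simp only [Finset.mul_sum]
        apply Finset.sum_congr rfl; intro j _
        ring
      have hsplit : t = (∑ k, ∑ l, (W k l - c k) * A σ k l) + ∑ k, c k * y σ k := by
        rw [ht']
        have : ∀ k, ∑ l, W k l * A σ k l
            = (∑ l, (W k l - c k) * A σ k l) + c k * y σ k := by
          intro k
          rw [← hAy σ k, Finset.mul_sum, ← Finset.sum_add_distrib]
          apply Finset.sum_congr rfl; intro l _; ring
        simp only [this, Finset.sum_add_distrib]
      rw [hsplit]
      have cs1 : (∑ k, ∑ l, (W k l - c k) * A σ k l)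
          ≤ N1 * Real.sqrt (∑ k, ∑ l, (A σ k l) ^ 2) := by
        have e1 : (∑ k, ∑ l, (W k l - c k) * A σ k l)
            = ∑ x : Fin p × Fin q, (W x.1 x.2 - c x.1) * A σ x.1 x.2 :=
          (Fintype.sum_prod_type (f := fun x : Fin p × Fin q => (W x.1 x.2 - c x.1) * A σ x.1 x.2)).symm
        have e2 : (∑ k, ∑ l, (W k l - c k) ^ 2)
            = ∑ x : Fin p × Fin q, (W x.1 x.2 - c x.1) ^ 2 :=
          (Fintype.sum_prod_type (f := fun x : Fin p × Fin q => (W x.1 x.2 - c x.1) ^ 2)).symm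
        have e3 : (∑ k, ∑ l, (A σ k l) ^ 2)
            = ∑ x : Fin p × Fin q, (A σ x.1 x.2) ^ 2 :=
          (Fintype.sum_prod_type (f := fun x : Fin p × Fin q => (A σ x.1 x.2) ^ 2)).symm
        rw [e1, e3]
        calc ∑ x : Fin p × Fin q, (W x.1 x.2 - c x.1) * A σ x.1 x.2
            ≤ Real.sqrt (∑ x : Fin p × Fin q, (W x.1 x.2 - c x.1) ^ 2)
              * Real.sqrt (∑ x : Fin p × Fin q, (A σ x.1 x.2) ^ 2) :=
              Real.sum_mul_le_sqrt_mul_sqrt _ _ _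
          _ ≤ N1 * Real.sqrt (∑ x : Fin p × Fin q, (A σ x.1 x.2) ^ 2) := by
              apply mul_le_mul_of_nonneg_right _ (Real.sqrt_nonneg _)
              rw [← e2]; exact h1
      have cs2 : (∑ k, c k * y σ k) ≤ N2 * Real.sqrt (∑ k, (y σ k) ^ 2) := by
        calc ∑ k, c k * y σ k
            ≤ Real.sqrt (∑ k, (c k) ^ 2) * Real.sqrt (∑ k, (y σ k) ^ 2) :=
              Real.sum_mul_le_sqrt_mul_sqrt _ _ _
          _ ≤ N2 * Real.sqrt (∑ k, (y σ k) ^ 2) :=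
              mul_le_mul_of_nonneg_right h2 (Real.sqrt_nonneg _)
      exact add_le_add cs1 cs2
    · positivity
  -- Orthogonality computations
  have hsumA : ∑ σ : Fin n → Bool, (∑ k, ∑ l, (A σ k l) ^ 2)
      = 2 ^ n * ((m : ℝ) * n) := by
    rw [Finset.sum_comm]
    have : ∀ k : Fin p, ∑ σ : Fin n → Bool, ∑ l, (A σ k l) ^ 2
        = 2 ^ n * ∑ j, ∑ l, (v j k * u j l) ^ 2 := by
      intro k
      rw [Finset.sum_comm]
      have : ∀ l : Fin q, ∑ σ : Fin n → Bool, (A σ k l) ^ 2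
          = 2 ^ n * ∑ j, (v j k * u j l) ^ 2 :=
        fun l => sum_sq_rademacher (fun j => v j k * u j l)
      simp only [this, ← Finset.mul_sum]
      rw [Finset.sum_comm]
    simp only [this, ← Finset.mul_sum]
    congr 1
    rw [Finset.sum_comm]
    have : ∀ j : Fin n, ∑ k, ∑ l, (v j k * u j l) ^ 2 = (m : ℝ) := by
      intro j
      have : ∀ k l, (v j k * u j l) ^ 2 = v j k * u j l := by
        intro k l
        rw [mul_pow, hsq01 _ ((hv j).1 k), hsq01 _ ((hu j).1 l)]
      simp only [this]
      simp only [← Finset.mul_sum, (hu j).2, mul_one]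
      exact (hv j).2
    simp only [this, Finset.sum_const, Finset.card_univ, Fintype.card_fin, nsmul_eq_mul]
    ring
  have hsumy : ∑ σ : Fin n → Bool, (∑ k, (y σ k) ^ 2) = 2 ^ n * ((m : ℝ) * n) := by
    rw [Finset.sum_comm]
    have : ∀ k : Fin p, ∑ σ : Fin n → Bool, (y σ k) ^ 2
        = 2 ^ n * ∑ j, (v j k) ^ 2 := fun k => sum_sq_rademacher (fun j => v j k)
    simp only [this, ← Finset.mul_sum]
    congr 1
    rw [Finset.sum_comm]
    have : ∀ j : Fin n, ∑ k, (v j k) ^ 2 = (m : ℝ) := by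
      intro j
      have : ∀ k, (v j k) ^ 2 = v j k := fun k => hsq01 _ ((hv j).1 k)
      simp only [this]
      exact (hv j).2
    simp only [this, Finset.sum_const, Finset.card_univ, Fintype.card_fin, nsmul_eq_mul]
    ring
  -- Jensen-type bound: sum of sqrts
  have jensen : ∀ (c : (Fin n → Bool) → ℝ), (∀ σ, 0 ≤ c σ) →
      (∑ σ : Fin n → Bool, c σ) = 2 ^ n * ((m : ℝ) * n) →
      ∑ σ : Fin n → Bool, Real.sqrt (c σ) ≤ 2 ^ n * Real.sqrt ((m : ℝ) * n) := by
    intro c hc hsum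
    have h1 : ∑ σ : Fin n → Bool, Real.sqrt (c σ)
        = ∑ σ : Fin n → Bool, Real.sqrt (c σ) * Real.sqrt 1 := by simp
    rw [h1]
    calc ∑ σ : Fin n → Bool, Real.sqrt (c σ) * Real.sqrt 1
        ≤ Real.sqrt (∑ σ : Fin n → Bool, c σ)
          * Real.sqrt (∑ _σ : Fin n → Bool, (1:ℝ)) :=
          Real.sum_sqrt_mul_sqrt_le _ hc (fun _ => zero_le_one)
      _ = 2 ^ n * Real.sqrt ((m : ℝ) * n) := by
          rw [hsum]
          have hcard : (∑ _σ : Fin n → Bool, (1:ℝ)) = 2 ^ n := by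
            simp [Finset.sum_const, Finset.card_univ, Fintype.card_fun]
          rw [hcard, Real.sqrt_mul (by positivity)]
          have h2 : Real.sqrt ((2:ℝ) ^ n) * Real.sqrt ((2:ℝ) ^ n) = 2 ^ n :=
            Real.mul_self_sqrt (by positivity)
          linear_combination Real.sqrt ((m:ℝ)*n) * h2
  have sumB : ∑ σ : Fin n → Bool, B σ ≤ 2 ^ n * ((N1 + N2) * Real.sqrt ((m : ℝ) * n)) := by
    rw [hB]
    simp only [Finset.sum_add_distrib, ← Finset.mul_sum]
    have b1 := jensen (fun σ => ∑ k, ∑ l, (A σ k l) ^ 2)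
      (fun σ => by positivity) hsumA
    have b2 := jensen (fun σ => ∑ k, (y σ k) ^ 2)
      (fun σ => by positivity) hsumy
    calc N1 * (∑ σ : Fin n → Bool, Real.sqrt (∑ k, ∑ l, (A σ k l) ^ 2))
          + N2 * (∑ σ : Fin n → Bool, Real.sqrt (∑ k, (y σ k) ^ 2))
        ≤ N1 * (2 ^ n * Real.sqrt ((m : ℝ) * n)) + N2 * (2 ^ n * Real.sqrt ((m : ℝ) * n)) :=
          add_le_add (mul_le_mul_of_nonneg_left b1 hN1) (mul_le_mul_of_nonneg_left b2 hN2)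
      _ = 2 ^ n * ((N1 + N2) * Real.sqrt ((m : ℝ) * n)) := by ring
  rw [div_le_iff₀ (by positivity : (0:ℝ) < 2 ^ n)]
  calc (∑ σ : Fin n → Bool,
        sSup {t : ℝ | ∃ W : Fin p → Fin q → ℝ,
          (Real.sqrt (∑ k : Fin p, ∑ l : Fin q,
              (W k l - (∑ l' : Fin q, W k l') / (q : ℝ)) ^ 2) ≤ N1
            ∧ Real.sqrt (∑ k : Fin p, ((∑ l' : Fin q, W k l') / (q : ℝ)) ^ 2) ≤ N2)
          ∧ t = ∑ j : Fin n, (if σ j then (1 : ℝ) else -1) *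
                  ∑ k : Fin p, ∑ l : Fin q, W k l * (v j k * u j l)})
      ≤ ∑ σ : Fin n → Bool, B σ := Finset.sum_le_sum (fun σ _ => stepA σ)
    _ ≤ 2 ^ n * ((N1 + N2) * Real.sqrt ((m : ℝ) * n)) := sumB
    _ = (N1 + N2) * Real.sqrt ((m : ℝ) * n) * 2 ^ n := by ring
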